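/- Let x, u : ℝ² → ℝ³ and let θ be a point at which x and u are differentiable. Write a_α = ∂x/∂θ^α(θ) and u,_α = ∂u/∂θ^α(θ), assume a₁ × a₂ ≠ 0, and set a₃ = (a₁ × a₂)/‖a₁ × a₂‖. For ε ∈ ℝ define the unit normal of the deformed surface n(ε) = ( (a₁ + ε u,₁) × (a₂ + ε u,₂) ) / ‖ (a₁ + ε u,₁) × (a₂ + ε u,₂) ‖. Then ε ↦ n(ε) is differentiable at ε = 0 with derivative w/‖a₁ × a₂‖ − a₃ (a₃ · w)/‖a₁ × a₂‖, where w = u,₁ × a₂ + a₁ × u,₂. -/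

import Mathlib

open Matrix

/-- The Euclidean norm of a vector in `ℝ³` (represented as `Fin 3 → ℝ`). -/
noncomputable def euclNorm3 (v : Fin 3 → ℝ) : ℝ :=
  ‖(EuclideanSpace.equiv (Fin 3) ℝ).symm v‖

lemma euclNorm3_eq_sqrt_dot (v : Fin 3 → ℝ) : euclNorm3 v = Real.sqrt (v ⬝ᵥ v) := by
  unfold euclNorm3
  rw [EuclideanSpace.norm_eq]
  congr 1
  simp [dotProduct, sq_abs, sq]

/-- **Linearisation of the deformed unit normal.**
Let `x u : ℝ² → ℝ³` be differentiable at `θ`, with `a_α = ∂x/∂θ^α(θ)`,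
`u,_α = ∂u/∂θ^α(θ)`, `a₁ × a₂ ≠ 0` and `a₃ = (a₁ × a₂)/‖a₁ × a₂‖`.  For `ε ∈ ℝ` the unit
normal of the deformed surface is
`n(ε) = ((a₁ + ε u,₁) × (a₂ + ε u,₂)) / ‖(a₁ + ε u,₁) × (a₂ + ε u,₂)‖`.
Then `ε ↦ n(ε)` is differentiable at `ε = 0` with derivative
`w/‖a₁ × a₂‖ − a₃ (a₃ · w)/‖a₁ × a₂‖`, where `w = u,₁ × a₂ + a₁ × u,₂`. -/
theorem deformed_unit_normal_linearisation
    (x u : (Fin 2 → ℝ) → (Fin 3 → ℝ)) (θ : Fin 2 → ℝ)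
    (hx : DifferentiableAt ℝ x θ) (hu : DifferentiableAt ℝ u θ)
    (a₁ a₂ u₁ u₂ a₃ : Fin 3 → ℝ)
    (ha₁ : a₁ = fderiv ℝ x θ (Pi.single (0 : Fin 2) (1 : ℝ)))
    (ha₂ : a₂ = fderiv ℝ x θ (Pi.single (1 : Fin 2) (1 : ℝ)))
    (hu₁ : u₁ = fderiv ℝ u θ (Pi.single (0 : Fin 2) (1 : ℝ)))
    (hu₂ : u₂ = fderiv ℝ u θ (Pi.single (1 : Fin 2) (1 : ℝ)))
    (hcross : a₁ ⨯₃ a₂ ≠ 0)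
    (ha₃ : a₃ = (euclNorm3 (a₁ ⨯₃ a₂))⁻¹ • (a₁ ⨯₃ a₂))
    (nrm : ℝ → Fin 3 → ℝ)
    (hnrm : ∀ ε : ℝ, nrm ε =
      (euclNorm3 ((a₁ + ε • u₁) ⨯₃ (a₂ + ε • u₂)))⁻¹ • ((a₁ + ε • u₁) ⨯₃ (a₂ + ε • u₂))) :
    HasDerivAt nrm
      ((euclNorm3 (a₁ ⨯₃ a₂))⁻¹ • (u₁ ⨯₃ a₂ + a₁ ⨯₃ u₂) -
        ((a₃ ⬝ᵥ (u₁ ⨯₃ a₂ + a₁ ⨯₃ u₂)) / euclNorm3 (a₁ ⨯₃ a₂)) • a₃)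
      0 := by
  set w : Fin 3 → ℝ := u₁ ⨯₃ a₂ + a₁ ⨯₃ u₂ with hw
  set c : ℝ → Fin 3 → ℝ := fun ε => (a₁ + ε • u₁) ⨯₃ (a₂ + ε • u₂) with hcdef
  set c0 : Fin 3 → ℝ := a₁ ⨯₃ a₂ with hc0
  have hcε : ∀ ε : ℝ, c ε = c0 + ε • w + (ε * ε) • (u₁ ⨯₃ u₂) := by
    intro ε
    simp only [hcdef, hw, hc0, map_add, _root_.map_smul, LinearMap.add_apply,
      LinearMap.smul_apply]
    module
  have hc00 : c 0 = c0 := by rw [hcε]; simp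
  -- derivative of c at 0
  have hc : HasDerivAt c w 0 := by
    have h1 : HasDerivAt (fun ε : ℝ => c0 + ε • w + (ε * ε) • (u₁ ⨯₃ u₂))
        (0 + (1 : ℝ) • w + ((1 * 0 + 0 * 1 : ℝ) • (u₁ ⨯₃ u₂))) 0 :=
      ((hasDerivAt_const 0 c0).add ((hasDerivAt_id 0).smul_const w)).add
        (((hasDerivAt_id 0).mul (hasDerivAt_id 0)).smul_const (u₁ ⨯₃ u₂))
    have h2 := h1.congr_of_eventuallyEq (Filter.Eventually.of_forall fun ε => (hcε ε))
    simpa using h2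
  -- dot product with itself
  have hQpos : (0 : ℝ) < c0 ⬝ᵥ c0 := by
    have hnn : (0:ℝ) ≤ c0 ⬝ᵥ c0 := Finset.sum_nonneg fun i _ => mul_self_nonneg _
    rcases lt_or_eq_of_le hnn with h | h
    · exact h
    · exact absurd (dotProduct_self_eq_zero.mp h.symm) hcross
  have hQne : c0 ⬝ᵥ c0 ≠ 0 := ne_of_gt hQpos
  set N : ℝ := Real.sqrt (c0 ⬝ᵥ c0) with hN
  have hNpos : 0 < N := Real.sqrt_pos.mpr hQpos
  have hNne : N ≠ 0 := ne_of_gt hNpos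
  have hN3 : euclNorm3 (a₁ ⨯₃ a₂) = N := euclNorm3_eq_sqrt_dot _
  -- componentwise derivatives
  have hci : ∀ i, HasDerivAt (fun ε => c ε i) (w i) 0 := hasDerivAt_pi.mp hc
  -- derivative of q ε = c ε ⬝ᵥ c ε
  have hq : HasDerivAt (fun ε => c ε ⬝ᵥ c ε) (2 * (c0 ⬝ᵥ w)) 0 := by
    have h1 : HasDerivAt (fun ε => ∑ i, c ε i * c ε i)
        (∑ i, (w i * c 0 i + c 0 i * w i)) 0 :=
      HasDerivAt.fun_sum fun i _ => (hci i).mul (hci i)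
    have h2 : (∑ i, (w i * c 0 i + c 0 i * w i)) = 2 * (c0 ⬝ᵥ w) := by
      rw [hc00]
      simp only [dotProduct, Finset.mul_sum, ← Finset.sum_add_distrib]
      exact Finset.sum_congr rfl fun i _ => by ring
    rw [h2] at h1
    exact h1.congr_of_eventuallyEq (Filter.Eventually.of_forall fun ε => by
      simp [dotProduct])
  -- derivative of g ε = √(q ε)
  have hg : HasDerivAt (fun ε => Real.sqrt (c ε ⬝ᵥ c ε)) (2 * (c0 ⬝ᵥ w) / (2 * N)) 0 := by
    have := hq.sqrt (by rw [hc00]; exact hQne)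
    rwa [hc00] at this
  have hg0 : Real.sqrt (c 0 ⬝ᵥ c 0) = N := by rw [hc00]
  -- derivative of inverse
  have hginv : HasDerivAt (fun ε => (Real.sqrt (c ε ⬝ᵥ c ε))⁻¹)
      (-(2 * (c0 ⬝ᵥ w) / (2 * N)) / N ^ 2) 0 := by
    have := hg.inv (by rw [hg0]; exact hNne)
    rwa [hg0] at this
  -- product rule
  have hmain := hginv.smul hc
  rw [hg0, hc00] at hmain
  have hfun : nrm = fun ε => (Real.sqrt (c ε ⬝ᵥ c ε))⁻¹ • c ε := by
    funext ε
    rw [hnrm ε, euclNorm3_eq_sqrt_dot]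
  rw [hfun]
  convert hmain using 1
  case e'_4 | e'_5 | e'_6 | e'_8 => rfl
  have hdot : a₃ ⬝ᵥ w = N⁻¹ * (c0 ⬝ᵥ w) := by
    rw [ha₃, hN3, smul_dotProduct, smul_eq_mul]
  rw [hdot, ha₃, hN3]
  match_scalars <;> field_simp <;> ring
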